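/- Let U be a neighborhood of 0 and let P : U → ℝ be a map such that for every x₀ ∈ U, P(x₀) = x(3τ), where x is a solution on [0,3τ] of the controlled system with x(0) = x₀. Then P(0) = 0 and P is differentiable at 0 with P'(0) = e^{3λτ}·(1 + ετ·(1 − e^{λτ})·e^{−2λτ}). -/

import Mathlib

/-- A solution on `[0,3τ]` of the ODFC system based on a delayed states difference
(with the control switched on, on `[2τ,3τ)`), with initial value `x₀`. -/
def IsSolDiffOn (f : ℝ → ℝ) (ε τ x₀ : ℝ) (x : ℝ → ℝ) : Prop :=
  ContinuousOn x (Set.Icc 0 (3 * τ)) ∧ x 0 = x₀ ∧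
  (∀ t ∈ Set.Ico (0 : ℝ) (2 * τ), HasDerivWithinAt x (f (x t)) (Set.Ici t) t) ∧
  (∀ t ∈ Set.Ico (2 * τ) (3 * τ),
      HasDerivWithinAt x (f (x t) + ε * (x (t - 2 * τ) - x (t - τ))) (Set.Ici t) t)


open Set Real Filter


lemma bootstrap_bound {x : ℝ → ℝ} {b δ : ℝ} (hb : 0 ≤ b) (hδ : 0 < δ)
    (hcont : ContinuousOn x (Set.Icc 0 b))
    (hind : ∀ T ∈ Set.Icc 0 b, (∀ s ∈ Set.Ico 0 T, |x s| ≤ δ) → |x T| < δ) :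
    ∀ t ∈ Set.Icc 0 b, |x t| ≤ δ := by
  set S : Set ℝ := {t | t ∈ Set.Icc 0 b ∧ ∀ s ∈ Set.Ico 0 t, |x s| ≤ δ} with hSdef
  have h0S : (0:ℝ) ∈ S := ⟨⟨le_refl 0, hb⟩, fun s hs => absurd hs.2 (not_lt.2 hs.1)⟩
  have hSbdd : BddAbove S := ⟨b, fun t ht => ht.1.2⟩
  have hSne : S.Nonempty := ⟨0, h0S⟩
  set T := sSup S with hTdef
  have hTmem : T ∈ Set.Icc 0 b := ⟨le_csSup hSbdd h0S, csSup_le hSne fun t ht => ht.1.2⟩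
  have key : ∀ s ∈ Set.Ico 0 T, |x s| ≤ δ := by
    intro s hs
    obtain ⟨t, htS, hst⟩ := (lt_csSup_iff hSbdd hSne).1 hs.2
    exact htS.2 s ⟨hs.1, hst⟩
  have hxT : |x T| < δ := hind T hTmem key
  have hTb : T = b := by
    by_contra hne
    have hTltb : T < b := lt_of_le_of_ne hTmem.2 hne
    have hcw : ContinuousWithinAt x (Set.Icc 0 b) T := hcont T hTmem
    have hev : ∀ᶠ s in nhdsWithin T (Set.Icc 0 b), |x s| < δ := by
      have := hcw.norm.eventually_lt_const (by simpa [Real.norm_eq_abs] using hxT)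
      simpa [Real.norm_eq_abs] using this
    rw [Metric.nhdsWithin_basis_ball.eventually_iff] at hev
    obtain ⟨ε', hε', hball⟩ := hev
    set t' := min (T + ε'/2) b with ht'def
    have hTt' : T < t' := lt_min (by linarith) hTltb
    have ht'S : t' ∈ S := by
      refine ⟨⟨le_trans hTmem.1 hTt'.le, min_le_right _ _⟩, ?_⟩
      intro s hs
      rcases lt_or_ge s T with h | h
      · exact key s ⟨hs.1, h⟩
      rcases eq_or_lt_of_le h with h' | h'
      · rw [← h']; exact hxT.le
      · refine (hball ⟨?_, ?_⟩).le
        · rw [Metric.mem_ball, Real.dist_eq, abs_of_pos (by linarith)]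
          have : s < T + ε'/2 := lt_of_lt_of_le hs.2 (min_le_left _ _)
          linarith
        · exact ⟨le_trans hTmem.1 h, le_trans hs.2.le (min_le_right _ _)⟩
    have := le_csSup hSbdd ht'S
    rw [← hTdef] at this
    linarith
  intro t ht
  rcases lt_or_ge t b with h | h
  · exact key t ⟨ht.1, by rw [hTb]; exact h⟩
  · have : t = b := le_antisymm ht.2 h
    rw [this, ← hTb]; exact hxT.le


lemma gb_le {d K c s M : ℝ} (hK : 0 < K) (hd : 0 ≤ d) (hc : 0 ≤ c)
    (hsM : Real.exp (K * s) ≤ M) : gronwallBound d K c s ≤ d * M + c / K * M := by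
  rw [gronwallBound_of_K_ne_0 hK.ne']
  have h0 : (0:ℝ) ≤ c / K := div_nonneg hc hK.le
  have h2 : Real.exp (K * s) - 1 ≤ M := by nlinarith [Real.exp_pos (K * s)]
  nlinarith [Real.exp_pos (K * s)]

lemma littleo_of_hasDerivAt {f : ℝ → ℝ} {lam : ℝ} (hfeq : f 0 = 0)
    (hfd : HasDerivAt f lam 0) :
    ∀ c > 0, ∃ d > 0, ∀ z : ℝ, |z| ≤ d → |f z - lam * z| ≤ c * |z| := by
  intro c hc
  have h := hasDerivAt_iff_isLittleO.1 hfd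
  rw [Asymptotics.isLittleO_iff] at h
  have h2 := h hc
  rw [Metric.eventually_nhds_iff] at h2
  obtain ⟨ε, hε, hb⟩ := h2
  refine ⟨ε/2, by linarith, fun z hz => ?_⟩
  have := hb (show dist z 0 < ε by rw [Real.dist_eq, sub_zero]; linarith)
  simpa [hfeq, Real.norm_eq_abs, mul_comm, sub_zero] using this


noncomputable def odfcLin (lam ε τ : ℝ) : ℝ → ℝ := fun t =>
  if t ≤ 2*τ then Real.exp (lam*t)
  else Real.exp (lam*t) * (1 + ε*(t-2*τ)*(Real.exp (-(2*lam*τ)) - Real.exp (-(lam*τ))))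

lemma odfcLin_of_le {lam ε τ t : ℝ} (ht : t ≤ 2*τ) : odfcLin lam ε τ t = Real.exp (lam*t) :=
  if_pos ht

lemma odfcLin_of_ge {lam ε τ s : ℝ} (hs : 2*τ ≤ s) :
    odfcLin lam ε τ s
      = Real.exp (lam*s) * (1 + ε*(s-2*τ)*(Real.exp (-(2*lam*τ)) - Real.exp (-(lam*τ)))) := by
  unfold odfcLin
  rcases eq_or_lt_of_le hs with h | h
  · rw [← h]; simp
  · rw [if_neg (not_le.2 h)]

lemma odfcLin_continuous (lam ε τ : ℝ) : Continuous (odfcLin lam ε τ) := by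
  unfold odfcLin
  apply Continuous.if_le
  · exact Real.continuous_exp.comp (continuous_const.mul continuous_id)
  · apply Continuous.mul
    · exact Real.continuous_exp.comp (continuous_const.mul continuous_id)
    · continuity
  · exact continuous_id
  · exact continuous_const
  · intro s hs; rw [hs]; simp

lemma odfcLin_deriv_one (lam ε τ : ℝ) {t : ℝ} (ht : t < 2*τ) :
    HasDerivAt (odfcLin lam ε τ) (lam * Real.exp (lam*t)) t := by
  have hexp : HasDerivAt (fun s => Real.exp (lam*s)) (lam * Real.exp (lam*t)) t := by
    convert ((hasDerivAt_id' t).const_mul lam).exp using 1; ring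
  apply hexp.congr_of_eventuallyEq
  filter_upwards [eventually_lt_nhds ht] with s hs
  exact odfcLin_of_le hs.le

lemma odfcLin_deriv_two (lam ε τ : ℝ) {t : ℝ} (ht : 2*τ ≤ t) :
    HasDerivWithinAt (odfcLin lam ε τ)
      (lam * odfcLin lam ε τ t + ε * (Real.exp (lam*(t-2*τ)) - Real.exp (lam*(t-τ))))
      (Set.Ici t) t := by
  set c := Real.exp (-(2*lam*τ)) - Real.exp (-(lam*τ)) with hc
  have hexp : HasDerivAt (fun s => Real.exp (lam*s)) (lam * Real.exp (lam*t)) t := by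
    convert ((hasDerivAt_id' t).const_mul lam).exp using 1; ring
  have hlin : HasDerivAt (fun s => 1 + ε*(s-2*τ)*c) (ε*1*c) t :=
    ((((hasDerivAt_id t).sub_const (2*τ)).const_mul ε).mul_const c).const_add 1
  have hg : HasDerivAt (fun s => Real.exp (lam*s) * (1 + ε*(s-2*τ)*c))
      (lam * Real.exp (lam*t) * (1 + ε*(t-2*τ)*c) + Real.exp (lam*t) * (ε*1*c)) t :=
    hexp.mul hlin
  have heq : HasDerivWithinAt (odfcLin lam ε τ)
      (lam * Real.exp (lam*t) * (1 + ε*(t-2*τ)*c) + Real.exp (lam*t) * (ε*1*c))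
      (Set.Ici t) t := by
    apply hg.hasDerivWithinAt.congr
    · intro s hs; exact odfcLin_of_ge (le_trans ht hs)
    · exact odfcLin_of_ge ht
  convert heq using 1
  rw [odfcLin_of_ge ht, hc]
  have e1 : Real.exp (lam*(t-2*τ)) = Real.exp (lam*t) * Real.exp (-(2*lam*τ)) := by
    rw [← Real.exp_add]; ring_nf
  have e2 : Real.exp (lam*(t-τ)) = Real.exp (lam*t) * Real.exp (-(lam*τ)) := by
    rw [← Real.exp_add]; ring_nf
  rw [e1, e2]; ring
set_option maxHeartbeats 1000000 in
lemma odfc_key (f : ℝ → ℝ) (lam ε τ : ℝ) (hfc : Continuous f) (hfeq : f 0 = 0)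
    (hfd : HasDerivAt f lam 0) (hlam : 0 < lam) (hτ : 0 < τ) :
    ∀ η > 0, ∃ δ₀ > 0, ∀ x₀ : ℝ, |x₀| ≤ δ₀ → ∀ x : ℝ → ℝ, IsSolDiffOn f ε τ x₀ x →
      |x (3*τ) - odfcLin lam ε τ (3*τ) * x₀| ≤ η * |x₀| := by
  set L := lam + 1 with hLdef
  have hL : 0 < L := by simp only [hLdef]; linarith
  obtain ⟨δ, hδpos, hδ⟩ := littleo_of_hasDerivAt hfeq hfd 1 one_pos
  have hfb : ∀ z : ℝ, |z| ≤ δ → |f z| ≤ L * |z| := by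
    intro z hz
    have h1 := hδ z hz
    have h2 : |f z| ≤ |lam * z| + |f z - lam * z| := by
      calc |f z| = |lam * z + (f z - lam * z)| := by ring_nf
        _ ≤ |lam * z| + |f z - lam * z| := abs_add_le _ _
    rw [abs_mul, abs_of_pos hlam] at h2
    simp only [hLdef]; nlinarith [abs_nonneg z]
  set C := Real.exp (L*(2*τ)) * Real.exp (L*τ) * (1 + 2*|ε|/L) with hCdef
  have hfac : 1 ≤ 1 + 2*|ε|/L := by
    have : 0 ≤ 2*|ε|/L := by positivity
    linarith
  have hexp2 : (1:ℝ) ≤ Real.exp (L*(2*τ)) := Real.one_le_exp (by positivity)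
  have hexp1 : (1:ℝ) ≤ Real.exp (L*τ) := Real.one_le_exp (by positivity)
  have hstep : (1:ℝ) ≤ Real.exp (L*τ) * (1 + 2*|ε|/L) := by nlinarith
  have hC2C : Real.exp (L*(2*τ)) ≤ C := by
    rw [hCdef]
    nlinarith [Real.exp_pos (L*(2*τ))]
  have hC1 : 1 ≤ C := le_trans hexp2 hC2C
  have hCpos : 0 < C := lt_of_lt_of_le one_pos hC1
  -- quantitative bound assuming a priori δ-bound
  have quant : ∀ (x₀ : ℝ) (x : ℝ → ℝ), IsSolDiffOn f ε τ x₀ x → ∀ T' ∈ Set.Icc 0 (3*τ),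
      (∀ s ∈ Set.Ico 0 T', |x s| ≤ δ) → ∀ t ∈ Set.Icc 0 T', |x t| ≤ C * |x₀| := by
    rintro x₀ x ⟨hxc, hx0, hd1, hd2⟩ T' hT' hbdd
    have hT3 : T' ≤ 3*τ := hT'.2
    have g1 : ∀ t ∈ Set.Icc 0 (min T' (2*τ)), |x t| ≤ |x₀| * Real.exp (L * t) := by
      intro t htmem
      have hmin3 : min T' (2*τ) ≤ 3*τ := le_trans (min_le_left _ _) hT3
      have conc := norm_le_gronwallBound_of_norm_deriv_right_le
        (f := x) (f' := fun s => f (x s)) (δ := |x₀|) (K := L) (ε := 0)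
        (a := 0) (b := min T' (2*τ))
        (hxc.mono (Set.Icc_subset_Icc le_rfl hmin3))
        (fun s hs => hd1 s ⟨hs.1, lt_of_lt_of_le hs.2 (min_le_right _ _)⟩)
        (by rw [Real.norm_eq_abs, hx0])
        (fun s hs => by
          rw [Real.norm_eq_abs, Real.norm_eq_abs, add_zero]
          have hmul : (2:ℝ) * τ = 2 * τ := rfl
          exact hfb (x s) (hbdd s ⟨hs.1, lt_of_lt_of_le hs.2 (min_le_left _ _)⟩))
        t htmem
      simpa [gronwallBound_ε0, Real.norm_eq_abs, sub_zero] using conc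
    rcases le_or_gt T' (2*τ) with hcase | hcase
    · intro t htmem
      have h1 := g1 t (by rwa [min_eq_left hcase])
      have h2 : Real.exp (L*t) ≤ Real.exp (L*(2*τ)) :=
        Real.exp_le_exp.2 (by nlinarith [htmem.2, le_trans htmem.2 hcase])
      have h3 : Real.exp (L*(2*τ)) ≤ C := hC2C
      calc |x t| ≤ |x₀| * Real.exp (L*t) := h1
        _ ≤ |x₀| * Real.exp (L*(2*τ)) := by nlinarith [abs_nonneg x₀]
        _ ≤ C * |x₀| := by nlinarith [abs_nonneg x₀]
    · have g1' : ∀ s ∈ Set.Icc 0 (2*τ), |x s| ≤ |x₀| * Real.exp (L*(2*τ)) := by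
        intro s hs
        have h1 := g1 s (by rwa [min_eq_right hcase.le])
        have h2 : Real.exp (L*s) ≤ Real.exp (L*(2*τ)) :=
          Real.exp_le_exp.2 (by nlinarith [hs.2])
        nlinarith [abs_nonneg x₀]
      set M₁ := |x₀| * Real.exp (L*(2*τ)) with hM₁def
      have hM₁ : 0 ≤ M₁ := by positivity
      have g2 : ∀ t ∈ Set.Icc (2*τ) T', |x t| ≤ gronwallBound M₁ L (2*|ε| *M₁) (t - 2*τ) := by
        apply norm_le_gronwallBound_of_norm_deriv_right_le
          (hxc.mono (Set.Icc_subset_Icc (by linarith) hT3))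
          (fun s hs => hd2 s ⟨hs.1, lt_of_lt_of_le hs.2 hT3⟩)
          (by rw [Real.norm_eq_abs]; exact g1' (2*τ) ⟨by linarith, le_rfl⟩)
        intro s hs
        have hs0 : 0 ≤ s := by linarith [hs.1]
        have hfs : |f (x s)| ≤ L * |x s| := hfb _ (hbdd s ⟨hs0, hs.2⟩)
        have ha : |x (s-2*τ)| ≤ M₁ := g1' _ ⟨by linarith [hs.1], by linarith [hs.2, hT3]⟩
        have hb : |x (s-τ)| ≤ M₁ := g1' _ ⟨by linarith [hs.1], by linarith [hs.2, hT3]⟩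
        rw [Real.norm_eq_abs, Real.norm_eq_abs]
        have htr : |f (x s) + ε * (x (s-2*τ) - x (s-τ))|
            ≤ |f (x s)| + |ε| * (|x (s-2*τ)| + |x (s-τ)|) := by
          calc |f (x s) + ε * (x (s-2*τ) - x (s-τ))|
              ≤ |f (x s)| + |ε * (x (s-2*τ) - x (s-τ))| := abs_add_le _ _
            _ ≤ |f (x s)| + |ε| * (|x (s-2*τ)| + |x (s-τ)|) := by
                rw [abs_mul]
                gcongr
                exact abs_sub _ _
        have h4 : |ε| * (|x (s-2*τ)| + |x (s-τ)|) ≤ |ε| * (2*M₁) :=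
          mul_le_mul_of_nonneg_left (by linarith) (abs_nonneg ε)
        have h5 : |ε| * (2*M₁) = 2*|ε| *M₁ := by ring
        linarith
      intro t htmem
      rcases le_or_gt t (2*τ) with h2 | h2
      · have h1 := g1' t ⟨htmem.1, h2⟩
        have h3 : Real.exp (L*(2*τ)) ≤ C := hC2C
        calc |x t| ≤ M₁ := h1
          _ = |x₀| * Real.exp (L*(2*τ)) := hM₁def
          _ ≤ C * |x₀| := by nlinarith [abs_nonneg x₀]
      · have h3 := g2 t ⟨h2.le, htmem.2⟩
        have h4 : gronwallBound M₁ L (2*|ε| *M₁) (t - 2*τ)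
            ≤ M₁ * Real.exp (L*τ) + (2*|ε| *M₁)/L * Real.exp (L*τ) :=
          gb_le hL hM₁ (by positivity)
            (Real.exp_le_exp.2 (by nlinarith [htmem.2]))
        have h5 : M₁ * Real.exp (L*τ) + (2*|ε| *M₁)/L * Real.exp (L*τ) = C * |x₀| := by
          rw [hM₁def, hCdef]
          field_simp
        linarith
  -- a priori bound via bootstrap
  set δ₁ := δ / (2*C) with hδ₁def
  have hδ₁pos : 0 < δ₁ := by positivity
  have apriori : ∀ x₀ : ℝ, |x₀| ≤ δ₁ → ∀ x : ℝ → ℝ, IsSolDiffOn f ε τ x₀ x →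
      ∀ t ∈ Set.Icc 0 (3*τ), |x t| ≤ C * |x₀| := by
    intro x₀ hx₀ x hx
    have hb3 : (0:ℝ) ≤ 3*τ := by linarith
    have hCx : C * |x₀| ≤ δ/2 := by
      have h1 : C * |x₀| ≤ C * δ₁ := mul_le_mul_of_nonneg_left hx₀ hCpos.le
      have h2 : C * δ₁ = δ/2 := by rw [hδ₁def]; field_simp
      linarith
    have hboot : ∀ t ∈ Set.Icc 0 (3*τ), |x t| ≤ δ := by
      apply bootstrap_bound hb3 hδpos hx.1
      intro T hT hbdd
      have := quant x₀ x hx T hT hbdd T ⟨hT.1, le_rfl⟩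
      linarith
    exact quant x₀ x hx (3*τ) ⟨hb3, le_rfl⟩ (fun s hs => hboot s ⟨hs.1, hs.2.le⟩)
  -- main estimate
  intro η hη
  set Ex := Real.exp (lam*(3*τ)) with hExdef
  have hExpos : 0 < Ex := Real.exp_pos _
  set A := Ex / lam with hAdef
  have hApos : 0 < A := by positivity
  set Kc := C * (A + (1 + 2*|ε| *A)/lam) * Ex with hKcdef
  have hKcpos : 0 < Kc := by
    have : 0 < A + (1 + 2*|ε| *A)/lam := by positivity
    positivity
  set η' := η / Kc with hη'def
  have hη'pos : 0 < η' := by positivity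
  obtain ⟨d, hdpos, hrd⟩ := littleo_of_hasDerivAt hfeq hfd η' hη'pos
  refine ⟨min δ₁ (d/C), by positivity, ?_⟩
  intro x₀ hx₀ x hx
  have hap : ∀ t ∈ Set.Icc 0 (3*τ), |x t| ≤ C * |x₀| :=
    apriori x₀ (le_trans hx₀ (min_le_left _ _)) x hx
  have hsmall : ∀ t ∈ Set.Icc 0 (3*τ), |x t| ≤ d := by
    intro t ht
    have h1 := hap t ht
    have h2 : C * |x₀| ≤ C * (d/C) := mul_le_mul_of_nonneg_left
      (le_trans hx₀ (min_le_right _ _)) hCpos.le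
    have h3 : C * (d/C) = d := by field_simp
    linarith
  set ρ := η' * (C * |x₀|) with hρdef
  have hρ0 : 0 ≤ ρ := by positivity
  have hrx : ∀ t ∈ Set.Icc 0 (3*τ), |f (x t) - lam * x t| ≤ ρ := by
    intro t ht
    calc |f (x t) - lam * x t| ≤ η' * |x t| := hrd _ (hsmall t ht)
      _ ≤ ρ := by rw [hρdef]; nlinarith [hap t ht]
  set y := odfcLin lam ε τ with hydef
  set e : ℝ → ℝ := fun t => x t - x₀ * y t with hedef
  obtain ⟨hxc, hx0, hd1, hd2⟩ := hx
  have hycont : Continuous y := odfcLin_continuous lam ε τ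
  have hec : ContinuousOn e (Set.Icc 0 (3*τ)) :=
    hxc.sub (continuous_const.mul hycont).continuousOn
  have he0 : e 0 = 0 := by
    simp only [hedef, hydef, hx0]
    rw [odfcLin_of_le (by linarith : (0:ℝ) ≤ 2*τ)]
    simp
  have hed1 : ∀ t ∈ Set.Ico (0:ℝ) (2*τ), HasDerivWithinAt e
      (lam * e t + (f (x t) - lam * x t)) (Set.Ici t) t := by
    intro t ht
    have h := (hd1 t ht).sub
      (((odfcLin_deriv_one lam ε τ ht.2).hasDerivWithinAt).const_mul x₀)
    refine h.congr_deriv ?_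
    simp only [hedef, hydef]
    rw [odfcLin_of_le ht.2.le]
    ring
  have gE1 : ∀ t ∈ Set.Icc (0:ℝ) (2*τ), |e t| ≤ ρ * A := by
    intro t ht
    have conc := norm_le_gronwallBound_of_norm_deriv_right_le
      (f := e) (f' := fun s => lam * e s + (f (x s) - lam * x s))
      (δ := 0) (K := lam) (ε := ρ) (a := 0) (b := 2*τ)
      (hec.mono (Set.Icc_subset_Icc le_rfl (by linarith)))
      hed1
      (by rw [Real.norm_eq_abs, he0]; simp)
      (fun s hs => by
        rw [Real.norm_eq_abs, Real.norm_eq_abs]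
        have h1 := hrx s ⟨hs.1, by linarith [hs.2]⟩
        calc |lam * e s + (f (x s) - lam * x s)|
            ≤ |lam * e s| + |f (x s) - lam * x s| := abs_add_le _ _
          _ ≤ lam * |e s| + ρ := by rw [abs_mul, abs_of_pos hlam]; linarith)
      t ht
    rw [Real.norm_eq_abs] at conc
    have h2 : gronwallBound 0 lam ρ (t - 0) ≤ 0 * Ex + ρ/lam * Ex :=
      gb_le hlam le_rfl hρ0
        (Real.exp_le_exp.2 (by nlinarith [ht.1, ht.2]))
    have h3 : 0 * Ex + ρ/lam * Ex = ρ * A := by rw [hAdef]; field_simp; ring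
    linarith
  have hed2 : ∀ t ∈ Set.Ico (2*τ) (3*τ), HasDerivWithinAt e
      (lam * e t + (f (x t) - lam * x t) + ε * (e (t - 2*τ) - e (t - τ)))
      (Set.Ici t) t := by
    intro t ht
    have h := (hd2 t ht).sub
      ((odfcLin_deriv_two lam ε τ ht.1).const_mul x₀)
    refine h.congr_deriv ?_
    simp only [hedef, hydef]
    rw [odfcLin_of_le (show t-2*τ ≤ 2*τ by linarith [ht.2]),
        odfcLin_of_le (show t-τ ≤ 2*τ by linarith [ht.2])]
    ring
  have gE2 := norm_le_gronwallBound_of_norm_deriv_right_le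
    (f := e) (f' := fun s => lam * e s + (f (x s) - lam * x s) + ε * (e (s - 2*τ) - e (s - τ)))
    (δ := ρ * A) (K := lam) (ε := ρ * (1 + 2*|ε| *A)) (a := 2*τ) (b := 3*τ)
    (hec.mono (Set.Icc_subset_Icc (by linarith) le_rfl))
    hed2
    (by rw [Real.norm_eq_abs]; exact gE1 (2*τ) ⟨by linarith, le_rfl⟩)
    (fun s hs => by
      rw [Real.norm_eq_abs, Real.norm_eq_abs]
      have h1 := hrx s ⟨by linarith [hs.1], by linarith [hs.2]⟩
      have ha := gE1 (s-2*τ) ⟨by linarith [hs.1], by linarith [hs.2]⟩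
      have hb := gE1 (s-τ) ⟨by linarith [hs.1], by linarith [hs.2]⟩
      have htr : |lam * e s + (f (x s) - lam * x s) + ε * (e (s-2*τ) - e (s-τ))|
          ≤ |lam * e s| + |f (x s) - lam * x s| + |ε| * (|e (s-2*τ)| + |e (s-τ)|) := by
        calc |lam * e s + (f (x s) - lam * x s) + ε * (e (s-2*τ) - e (s-τ))|
            ≤ |lam * e s + (f (x s) - lam * x s)| + |ε * (e (s-2*τ) - e (s-τ))| := abs_add_le _ _
          _ ≤ |lam * e s| + |f (x s) - lam * x s| + |ε| * (|e (s-2*τ)| + |e (s-τ)|) := by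
              rw [abs_mul]
              have h2 := abs_add_le (lam * e s) (f (x s) - lam * x s)
              have h3 := abs_sub (e (s-2*τ)) (e (s-τ))
              nlinarith [abs_nonneg ε]
      rw [abs_mul, abs_of_pos hlam] at htr
      nlinarith [abs_nonneg ε])
    (3*τ) ⟨by linarith, le_rfl⟩
  rw [Real.norm_eq_abs] at gE2
  have hgb : gronwallBound (ρ * A) lam (ρ * (1 + 2*|ε| *A)) (3*τ - 2*τ)
      ≤ ρ * A * Ex + (ρ * (1 + 2*|ε| *A))/lam * Ex :=
    gb_le hlam (by positivity) (by positivity)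
      (Real.exp_le_exp.2 (by nlinarith))
  have hfin : ρ * A * Ex + (ρ * (1 + 2*|ε| *A))/lam * Ex = η * |x₀| := by
    rw [hρdef, hη'def, hKcdef, hAdef]
    field_simp
  have hgoal : |e (3*τ)| ≤ η * |x₀| := by linarith
  have : x (3*τ) - odfcLin lam ε τ (3*τ) * x₀ = e (3*τ) := by
    simp only [hedef, hydef]; ring
  rw [this]
  exact hgoal

lemma odfcLin_three {lam ε τ : ℝ} (hτ : 0 < τ) :
    odfcLin lam ε τ (3*τ)
      = Real.exp (3 * lam * τ) *
        (1 + ε * τ * (1 - Real.exp (lam * τ)) * Real.exp (-(2 * lam * τ))) := by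
  rw [odfcLin_of_ge (by linarith)]
  have h1 : Real.exp (-(lam*τ)) = Real.exp (lam*τ) * Real.exp (-(2*lam*τ)) := by
    rw [← Real.exp_add]; ring_nf
  have h2 : lam * (3*τ) = 3 * lam * τ := by ring
  rw [h1, h2]
  ring

/-- The period map `P` of the ODFC method based on a delayed states difference fixes `0`
and has derivative `e^{3λτ}·(1 + ετ·(1 − e^{λτ})·e^{−2λτ})` at `0`. -/
theorem odfc_states_difference_period_map_derivative
    (f : ℝ → ℝ) (lam ε τ : ℝ)
    (hf : ContDiff ℝ 1 f) (hfeq : f 0 = 0) (hfd : deriv f 0 = lam)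
    (hlam : 0 < lam) (hτ : 0 < τ)
    (U : Set ℝ) (hU : U ∈ nhds (0 : ℝ)) (P : ℝ → ℝ)
    (hP : ∀ x₀ ∈ U, ∃ x : ℝ → ℝ, IsSolDiffOn f ε τ x₀ x ∧ P x₀ = x (3 * τ)) :
    P 0 = 0 ∧
    HasDerivAt P
      (Real.exp (3 * lam * τ) *
        (1 + ε * τ * (1 - Real.exp (lam * τ)) * Real.exp (-(2 * lam * τ)))) 0 := by
  have hfd' : HasDerivAt f lam 0 := by
    have := ((hf.differentiable one_ne_zero) 0).hasDerivAt
    rwa [hfd] at this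
  have key := odfc_key f lam ε τ hf.continuous hfeq hfd' hlam hτ
  have hP0 : P 0 = 0 := by
    obtain ⟨x, hx, hPx⟩ := hP 0 (mem_of_mem_nhds hU)
    obtain ⟨δ₀, hδ₀, hkey⟩ := key 1 one_pos
    have h := hkey 0 (by simpa using hδ₀.le) x hx
    rw [hPx]
    simp only [mul_zero, sub_zero, abs_zero] at h
    exact abs_eq_zero.1 (le_antisymm h (abs_nonneg _))
  refine ⟨hP0, ?_⟩
  rw [hasDerivAt_iff_isLittleO, Asymptotics.isLittleO_iff]
  intro c hc
  obtain ⟨δ₀, hδ₀, hkey⟩ := key c hc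
  have h1 : ∀ᶠ z in nhds (0:ℝ), z ∈ U := Filter.eventually_iff.2 (by simpa using hU)
  have h2 : ∀ᶠ z in nhds (0:ℝ), |z| ≤ δ₀ := by
    filter_upwards [Metric.closedBall_mem_nhds (0:ℝ) hδ₀] with z hz
    simpa [Real.dist_eq] using hz
  filter_upwards [h1, h2] with z hzU hz
  obtain ⟨x, hx, hPz⟩ := hP z hzU
  have h := hkey z hz x hx
  rw [odfcLin_three hτ] at h
  simpa [hP0, hPz, Real.norm_eq_abs, mul_comm, smul_eq_mul] using h
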